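/- Let {φ_t} be a Markov chain on a finite state space S with optimal set S_opt, let d: S → ℝ≥0 be a drift function with d(x) = 0 for x ∈ S_opt and d(x) > 0 otherwise, and let G(x) denote the expected hitting time of S_opt starting from x. If for every non-optimal point x the one-step drift Δ(x) := Σ_{y ∈ S} P(x,y)(d(x) − d(y)) satisfies Δ(x) ≥ 1, then G(x) ≤ d(x) for all x ∈ S. -/

import Mathlib

/-- Drift analysis upper bound: if the one-step drift with respect to a drift
function `d` (nonnegative, zero exactly on the optimal set) is at least 1 at
every non-optimal point, then the expected hitting time `G` of the optimal set
satisfies `G x ≤ d x` everywhere.  Here `G` is characterized as the (finite)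
expected first hitting time of `opt`: it is nonnegative, vanishes on `opt`,
and satisfies the one-step recurrence off `opt`. -/
theorem stmt0 {S : Type*} [Fintype S]
    (P : S → S → ℝ) (opt : Set S) (d G : S → ℝ)
    (hP0 : ∀ x y, 0 ≤ P x y) (hP1 : ∀ x, ∑ y, P x y = 1)
    (hd0 : ∀ x, 0 ≤ d x)
    (hdopt : ∀ x ∈ opt, d x = 0) (hdpos : ∀ x ∉ opt, 0 < d x)
    (hG0 : ∀ x, 0 ≤ G x) (hGopt : ∀ x ∈ opt, G x = 0)
    (hGrec : ∀ x ∉ opt, G x = 1 + ∑ y, P x y * G y)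
    (hdrift : ∀ x ∉ opt, 1 ≤ ∑ y, P x y * (d x - d y)) :
    ∀ x, G x ≤ d x := by
  classical
  set f : S → ℝ := fun x => G x - d x with hf
  by_contra hcon
  push_neg at hcon
  obtain ⟨x₀, hx₀⟩ := hcon
  have hne : (Finset.univ : Finset S).Nonempty := ⟨x₀, Finset.mem_univ x₀⟩
  obtain ⟨m, hm_mem, hm_max⟩ := Finset.exists_max_image Finset.univ f hne
  set M := f m with hM
  have hMpos : 0 < M := lt_of_lt_of_le (by simpa [hf] using sub_pos.mpr hx₀)
    (hm_max x₀ (Finset.mem_univ x₀))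
  -- f = 0 on opt
  have hfopt : ∀ x ∈ opt, f x = 0 := fun x hx => by
    simp [hf, hGopt x hx, hdopt x hx]
  -- subharmonic estimate off opt
  have hsub : ∀ x ∉ opt, f x ≤ ∑ y, P x y * f y := by
    intro x hx
    have h1 := hdrift x hx
    have hsum : ∑ y, P x y * (d x - d y) = d x - ∑ y, P x y * d y := by
      rw [Finset.sum_congr rfl (fun y _ => mul_sub (P x y) (d x) (d y)),
        Finset.sum_sub_distrib, ← Finset.sum_mul, hP1, one_mul]
    have hd : 1 + ∑ y, P x y * d y ≤ d x := by
      rw [hsum] at h1; linarith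
    have hGx := hGrec x hx
    have : ∑ y, P x y * f y = (∑ y, P x y * G y) - ∑ y, P x y * d y := by
      rw [← Finset.sum_sub_distrib]
      exact Finset.sum_congr rfl fun y _ => by simp [hf, mul_sub]
    rw [this]
    simp only [hf]
    linarith
  -- the maximum set
  set A : Finset S := Finset.univ.filter (fun y => f y = M) with hA
  have hmA : m ∈ A := by simp [hA, hM]
  -- from any point of A, all transitions with positive prob stay in A
  have hstay : ∀ x ∈ A, ∀ y, 0 < P x y → y ∈ A := by
    intro x hxA y hPy
    have hfx : f x = M := (Finset.mem_filter.mp hxA).2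
    have hxopt : x ∉ opt := by
      intro h; rw [hfopt x h] at hfx; linarith
    have hle := hsub x hxopt
    have key : ∑ z, P x z * (M - f z) = 0 := by
      have : ∑ z, P x z * (M - f z) = M - ∑ z, P x z * f z := by
        rw [Finset.sum_congr rfl (fun z _ => mul_sub (P x z) M (f z)),
          Finset.sum_sub_distrib, ← Finset.sum_mul, hP1, one_mul]
      rw [this]
      have hub : ∑ z, P x z * f z ≤ ∑ z, P x z * M := by
        apply Finset.sum_le_sum
        intro z _
        exact mul_le_mul_of_nonneg_left (hm_max z (Finset.mem_univ z)) (hP0 x z)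
      have : ∑ z, P x z * M = M := by rw [← Finset.sum_mul, hP1, one_mul]
      have h2 : ∑ z, P x z * f z ≤ M := by linarith
      have h3 : M ≤ ∑ z, P x z * f z := by rw [← hfx] at *; linarith
      linarith
    have hnn : ∀ z ∈ Finset.univ, 0 ≤ P x z * (M - f z) := fun z _ =>
      mul_nonneg (hP0 x z) (by linarith [hm_max z (Finset.mem_univ z)])
    have hz := (Finset.sum_eq_zero_iff_of_nonneg hnn).mp key y (Finset.mem_univ y)
    have : M - f y = 0 := by
      rcases mul_eq_zero.mp hz with h | h
      · exact absurd h (ne_of_gt hPy)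
      · exact h
    simp [hA]
    linarith
  -- take the minimizer of G on A
  obtain ⟨z, hzA, hz_min⟩ := Finset.exists_min_image A G ⟨m, hmA⟩
  have hfz : f z = M := (Finset.mem_filter.mp hzA).2
  have hzopt : z ∉ opt := by
    intro h; rw [hfopt z h] at hfz; linarith
  have hGz := hGrec z hzopt
  have hge : ∑ y, P z y * G y ≥ ∑ y, P z y * G z := by
    apply Finset.sum_le_sum
    intro y _
    rcases lt_or_eq_of_le (hP0 z y) with hpos | heq
    · exact mul_le_mul_of_nonneg_left (hz_min y (hstay z hzA y hpos)) (le_of_lt hpos)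
    · rw [← heq]; simp
  have : ∑ y, P z y * G z = G z := by rw [← Finset.sum_mul, hP1, one_mul]
  linarith
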